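/- Let H be an abelian group, p a prime, and λ an ordinal. For every x ∈ p^λ H there exists a family (x_μ), indexed by strictly decreasing finite sequences μ = (μ_1 > ⋯ > μ_n) of ordinals below λ (including the empty sequence), such that: x_∅ = x; each x_μ ∈ p^{min(μ)} H (where min(∅) := λ); and p·x_μ = x_{μ restricted to its first n−1 entries} whenever μ has length n > 0. -/

import Mathlib

/-- The transfinite `p`-power subgroup `p^λ A`. -/
noncomputable def pPow (p : ℕ) (A : Type) [AddCommGroup A] (lam : Ordinal) : AddSubgroup A :=
  Ordinal.limitRecOn lam ⊤ (fun _ S => S.map (zsmulAddGroupHom (p : ℤ)))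
    (fun o _ ih => ⨅ b : Set.Iio o, ih b.1 b.2)

lemma pPow_succ (p : ℕ) (A : Type) [AddCommGroup A] (o : Ordinal) :
    pPow p A (Order.succ o) = (pPow p A o).map (zsmulAddGroupHom (p : ℤ)) :=
  Ordinal.limitRecOn_succ _ _ _ _

lemma pPow_limit (p : ℕ) (A : Type) [AddCommGroup A] {o : Ordinal} (ho : Order.IsSuccLimit o) :
    pPow p A o = ⨅ b : Set.Iio o, pPow p A b.1 :=
  Ordinal.limitRecOn_limit _ _ _ _ ho

lemma pPow_anti (p : ℕ) (A : Type) [AddCommGroup A] :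
    ∀ {b a : Ordinal}, a ≤ b → pPow p A b ≤ pPow p A a := by
  intro b
  induction b using Ordinal.limitRecOn with
  | zero => intro a ha; rw [nonpos_iff_eq_zero.mp ha]
  | add_one o ih =>
    intro a ha
    rw [Ordinal.add_one_eq_succ] at ha ⊢
    rcases eq_or_lt_of_le ha with rfl | h
    · exact le_rfl
    · refine le_trans ?_ (ih (Order.lt_succ_iff.mp h))
      rw [pPow_succ]
      rintro y ⟨z, hz, rfl⟩
      exact AddSubgroup.zsmul_mem _ hz _
  | limit o ho ih =>
    intro a ha
    rcases eq_or_lt_of_le ha with rfl | h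
    · exact le_rfl
    · rw [pPow_limit p A ho]
      exact iInf_le _ (⟨a, h⟩ : Set.Iio o)

theorem stmt_12 (H : Type) [AddCommGroup H] (p : ℕ) (hp : p.Prime)
    (lam : Ordinal) (x : H) (hx : x ∈ pPow p H lam) :
    ∃ f : List Ordinal → H,
      f [] = x ∧
      ∀ mu : List Ordinal, mu.Chain' (· > ·) → (∀ o ∈ mu, o < lam) →
        f mu ∈ pPow p H (mu.getLast?.getD lam) ∧
        (mu ≠ [] → p • f mu = f mu.dropLast) := by
  classical
  -- step: given o and y, pick a preimage of y under p• in pPow o if possible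
  let step : Ordinal → H → H := fun o y =>
    if h : y ∈ (pPow p H o).map (zsmulAddGroupHom (p : ℤ)) then
      (AddSubgroup.mem_map.mp h).choose
    else 0
  have step_spec : ∀ (o : Ordinal) (y : H),
      y ∈ (pPow p H o).map (zsmulAddGroupHom (p : ℤ)) →
      step o y ∈ pPow p H o ∧ (p : ℤ) • step o y = y := by
    intro o y h
    have := (AddSubgroup.mem_map.mp h).choose_spec
    simp only [step, dif_pos h]
    exact ⟨this.1, this.2⟩
  -- g works on reversed lists
  let g : List Ordinal → H := fun l => List.rec x (fun o _ ih => step o ih) l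
  refine ⟨fun mu => g mu.reverse, rfl, ?_⟩
  intro mu
  induction mu using List.reverseRecOn with
  | nil => intro _ _; exact ⟨hx, fun h => absurd rfl h⟩
  | append_singleton nu o ih =>
    intro hchain hbd
    have hchain' : List.Chain' (· > ·) nu ∧ ∀ m ∈ nu.getLast?, m > o := by
      rw [List.Chain', List.isChain_append] at hchain
      refine ⟨hchain.1, fun m hm => hchain.2.2 m hm o rfl⟩
    have hbd' : ∀ b ∈ nu, b < lam := fun b hb => hbd b (by simp [hb])
    obtain ⟨ihm, _⟩ := ih hchain'.1 hbd'
    -- o < min nu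
    have holt : o < nu.getLast?.getD lam := by
      cases h : nu.getLast? with
      | none => simpa [h] using hbd o (by simp)
      | some m => simpa [h] using hchain'.2 m h
    have hmem : g nu.reverse ∈ (pPow p H o).map (zsmulAddGroupHom (p : ℤ)) := by
      rw [← pPow_succ]
      exact pPow_anti p H (Order.succ_le_of_lt holt) ihm
    have hrev : (nu ++ [o]).reverse = o :: nu.reverse := by simp
    have hg : g ((nu ++ [o]).reverse) = step o (g nu.reverse) := by rw [hrev]
    obtain ⟨h1, h2⟩ := step_spec o _ hmem
    constructor
    · show g (nu ++ [o]).reverse ∈ pPow p H ((nu ++ [o]).getLast?.getD lam)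
      rw [hg, List.getLast?_concat]
      exact h1
    · intro _
      show p • g (nu ++ [o]).reverse = g ((nu ++ [o]).dropLast).reverse
      rw [hg, List.dropLast_concat, ← natCast_zsmul]
      exact h2
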